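/- arXiv:0903.4237 — 2 statements merged into one kernel-verified Lean document; each statement's English description precedes it below -/
import Mathlib

section
/- Let q be a prime power, k a positive integer, and let S be a multiset of integers of size (q^k − 1)/(q − 1). For every vector π indexed by the points of PG(k−1, q) whose entries are a permutation of S, every entry of M_{k,q}^{-1} π is at least δ_q(S)/q^{k−1}. -/
open Matrix

noncomputable section

instance instFiniteProjectivization (K V : Type*) [DivisionRing K] [AddCommGroup V] [Module K V]
    [Finite V] : Finite (Projectivization K V) :=
  Quotient.finite _

noncomputable instance instFintypeProjectivization (K V : Type*) [DivisionRing K] [AddCommGroup V]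
    [Module K V] [Finite V] : Fintype (Projectivization K V) :=
  Fintype.ofFinite _

noncomputable instance instDecEqProjectivization (K V : Type*) [DivisionRing K] [AddCommGroup V]
    [Module K V] : DecidableEq (Projectivization K V) :=
  Classical.decEq _

/-- The projective multiset of weight changes of a linear map between linear codes
`U ⊆ F^n` and `V ⊆ F^m`: the multiset `{w(u) - w(φ(u)) : u ∈ P(U)}`. -/
def projWeightChanges {F : Type} [Field F] [Fintype F] [DecidableEq F] {n m : ℕ}
    {U : Submodule F (Fin n → F)} {V : Submodule F (Fin m → F)} (φ : U →ₗ[F] V) : Multiset ℤ :=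
  (Finset.univ : Finset (Projectivization F U)).val.map
    fun p => (hammingNorm (p.rep : Fin n → F) : ℤ) - (hammingNorm ((φ p.rep : V) : Fin m → F) : ℤ)

/-- S is realized by some F-linear map between linear codes. -/
def Realizes (F : Type) [Field F] [Fintype F] [DecidableEq F] (S : Multiset ℤ) : Prop :=
  ∃ (n m : ℕ) (U : Submodule F (Fin n → F)) (V : Submodule F (Fin m → F)) (φ : U →ₗ[F] V),
    projWeightChanges φ = S

/-- A coordinate projection up to monomial equivalence: multiplication by a matrix
with at most one nonzero entry in each row and each column. -/
def IsProjection {F : Type} [Field F] [Fintype F] [DecidableEq F] {n m : ℕ}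
    {U : Submodule F (Fin n → F)} {V : Submodule F (Fin m → F)} (φ : U →ₗ[F] V) : Prop :=
  ∃ M : Matrix (Fin m) (Fin n) F,
    (∀ u : U, ((φ u : Fin m → F)) = M.mulVec (u : Fin n → F)) ∧
    (∀ i j j', M i j ≠ 0 → M i j' ≠ 0 → j = j') ∧
    (∀ i i' j, M i j ≠ 0 → M i' j ≠ 0 → i = i')

/-- A monomial equivalence: multiplication by an n × n matrix with exactly one
nonzero entry in each row and each column. -/
def IsMonomialEquiv {F : Type} [Field F] [Fintype F] [DecidableEq F] {n : ℕ}
    {U V : Submodule F (Fin n → F)} (φ : U →ₗ[F] V) : Prop :=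
  ∃ M : Matrix (Fin n) (Fin n) F,
    (∀ u : U, ((φ u : Fin n → F)) = M.mulVec (u : Fin n → F)) ∧
    (∀ i, ∃! j, M i j ≠ 0) ∧
    (∀ j, ∃! i, M i j ≠ 0)

/-- S is q-projection-forcing: every linear map over a field of order q realizing S
is a projection. -/
def ProjectionForcing (q : ℕ) (S : Multiset ℤ) : Prop :=
  ∀ (F : Type) [Field F] [Fintype F] [DecidableEq F], Fintype.card F = q →
    ∀ (n m : ℕ) (U : Submodule F (Fin n → F)) (V : Submodule F (Fin m → F))
      (φ : U →ₗ[F] V), projWeightChanges φ = S → IsProjection φ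

/-- The matrix M_{k,q}: rows and columns indexed by points of PG(k-1,q), with (v,w)
entry 0 if v ⬝ w = 0 and 1 otherwise. -/
def Mkq (F : Type) [Field F] [Fintype F] [DecidableEq F] (k : ℕ) :
    Matrix (Projectivization F (Fin k → F)) (Projectivization F (Fin k → F)) ℝ :=
  Matrix.of fun v w => if dotProduct v.rep w.rep = 0 then (0 : ℝ) else 1

/-- The q-ary split difference of a multiset S. -/
def splitDiff (q k : ℕ) (S : Multiset ℤ) : ℤ :=
  (((S.sort (· ≤ ·)).take (q ^ (k - 1))).sum) -
    ((q : ℤ) - 1) * (((S.sort (· ≤ ·)).drop (q ^ (k - 1))).sum)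

end

open Finset
set_option linter.unusedSectionVars false
set_option maxHeartbeats 1000000

section ListLemma
open List

lemma sum_take_le_of_sublist : ∀ (l l' : List ℤ), l.Pairwise (· ≤ ·) → l' <+ l →
    (l.take l'.length).sum ≤ l'.sum := by
  intro l
  induction l with
  | nil => intro l' _ h; simp [List.sublist_nil.mp h]
  | cons a t ih =>
    intro l' hs hsub
    have hs' := List.pairwise_cons.mp hs
    cases hsub with
    | cons =>
      rename_i h
      cases l' with
      | nil => simp
      | cons b l'' =>
        have hbt : b ∈ t := h.subset List.mem_cons_self
        have hab : a ≤ b := hs'.1 b hbt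
        have h'' : l'' <+ t := (List.sublist_cons_self b l'').trans h
        have iht := ih l'' hs'.2 h''
        simp only [List.length_cons, List.take_succ_cons, List.sum_cons]
        linarith
    | cons_cons =>
      rename_i l'' h
      have iht := ih l'' hs'.2 h
      simp only [List.length_cons, List.take_succ_cons, List.sum_cons]
      linarith

lemma take_sum_le_multiset (S T : Multiset ℤ) (h : T ≤ S) :
    ((S.sort (· ≤ ·)).take (Multiset.card T)).sum ≤ T.sum := by
  have hsub : T.sort (· ≤ ·) <+ S.sort (· ≤ ·) := by
    apply List.sublist_of_subperm_of_pairwise _ (Multiset.pairwise_sort _ _) (Multiset.pairwise_sort _ _)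
    rw [← Multiset.coe_le, Multiset.sort_eq, Multiset.sort_eq]
    exact h
  have hle := sum_take_le_of_sublist (S.sort (· ≤ ·)) (T.sort (· ≤ ·))
      (Multiset.pairwise_sort _ _) hsub
  have h2 : (T.sort (· ≤ ·)).sum = T.sum := by
    rw [← Multiset.sum_coe, Multiset.sort_eq]
  rw [Multiset.length_sort] at hle
  exact h2 ▸ hle

end ListLemma

section Counting

variable {F : Type} [Field F] [Fintype F] [DecidableEq F] {k : ℕ}

lemma dot_nondegen {x : Fin k → F} (h : ∀ u, dotProduct u x = 0) : x = 0 := by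
  funext i
  have := h (Pi.single i 1)
  simpa using this

lemma exists_dot_ne {x : Fin k → F} (hx : x ≠ 0) : ∃ u, dotProduct u x ≠ 0 := by
  by_contra hc
  push_neg at hc
  exact hx (dot_nondegen hc)

/-- The linear functional `u ↦ u ⬝ᵥ x`. -/
def dotL (x : Fin k → F) : (Fin k → F) →ₗ[F] F where
  toFun u := dotProduct u x
  map_add' u v := add_dotProduct u v x
  map_smul' c u := by simp [smul_dotProduct, smul_eq_mul]

lemma dotL_surj {x : Fin k → F} (hx : x ≠ 0) : Function.Surjective (dotL x) := by
  obtain ⟨u₀, hu₀⟩ := exists_dot_ne hx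
  intro c
  refine ⟨(c * (dotProduct u₀ x)⁻¹) • u₀, ?_⟩
  simp only [dotL, LinearMap.coe_mk, AddHom.coe_mk, smul_dotProduct, smul_eq_mul]
  field_simp

lemma finrank_ker_dotL {x : Fin k → F} (hx : x ≠ 0) :
    Module.finrank F (LinearMap.ker (dotL x)) = k - 1 ∧ 1 ≤ k := by
  have h1 := LinearMap.finrank_range_add_finrank_ker (dotL x)
  rw [LinearMap.range_eq_top.mpr (dotL_surj hx), finrank_top, Module.finrank_self,
    Module.finrank_fin_fun] at h1
  omega

lemma card_ker_dot {x : Fin k → F} (hx : x ≠ 0) :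
    (univ.filter fun u : Fin k → F => dotProduct u x = 0).card
      = Fintype.card F ^ (k - 1) := by
  haveI : Fintype ↥(LinearMap.ker (dotL x)) := Fintype.ofFinite _
  have e1 : (univ.filter fun u : Fin k → F => dotProduct u x = 0).card
      = Fintype.card {u : Fin k → F // dotProduct u x = 0} :=
    (Fintype.card_subtype _).symm
  have e2 : Fintype.card {u : Fin k → F // dotProduct u x = 0}
      = Fintype.card ↥(LinearMap.ker (dotL x)) := by
    apply Fintype.card_congr
    apply Equiv.subtypeEquivRight
    intro u
    simp [dotL, LinearMap.mem_ker]
  rw [e1, e2, Module.card_eq_pow_finrank (K := F), (finrank_ker_dotL hx).1]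

lemma ker_dotL_eq {a b : Fin k → F} (ha : a ≠ 0)
    (h : LinearMap.ker (dotL a) = LinearMap.ker (dotL b)) : ∃ c : F, b = c • a := by
  obtain ⟨u₀, hu₀⟩ := exists_dot_ne ha
  set c : F := dotProduct u₀ b * (dotProduct u₀ a)⁻¹ with hc
  refine ⟨c, ?_⟩
  have key : ∀ u, dotProduct u b = dotProduct u a * c := by
    intro u
    have hmem : (u - (dotProduct u a * (dotProduct u₀ a)⁻¹) • u₀)
        ∈ LinearMap.ker (dotL a) := by
      simp only [dotL, LinearMap.mem_ker, LinearMap.coe_mk, AddHom.coe_mk,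
        sub_dotProduct, smul_dotProduct, smul_eq_mul]
      field_simp
      simp
    rw [h, LinearMap.mem_ker] at hmem
    simp only [dotL, LinearMap.coe_mk, AddHom.coe_mk, sub_dotProduct,
      smul_dotProduct, smul_eq_mul] at hmem
    have := sub_eq_zero.mp hmem
    rw [this, hc]
    ring
  have hz : ∀ u, dotProduct u (b - c • a) = 0 := by
    intro u
    rw [dotProduct_sub, dotProduct_smul, key u, smul_eq_mul]
    ring
  have := dot_nondegen hz
  rw [sub_eq_zero] at this
  exact this
  

lemma card_ker_dot_pair {a b : Fin k → F} (ha : a ≠ 0) (hb : b ≠ 0)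
    (hne : LinearMap.ker (dotL a) ≠ LinearMap.ker (dotL b)) :
    2 ≤ k ∧ Fintype.card F *
      (univ.filter fun u : Fin k → F =>
        dotProduct u a = 0 ∧ dotProduct u b = 0).card
      = Fintype.card F ^ (k - 1) := by
  set Ka := LinearMap.ker (dotL a) with hKa
  set Kb := LinearMap.ker (dotL b) with hKb
  have hra := (finrank_ker_dotL ha).1
  have hrb := (finrank_ker_dotL hb).1
  have hk1 := (finrank_ker_dotL ha).2
  rw [← hKa] at hra
  rw [← hKb] at hrb
  have hsup : Ka ⊔ Kb = ⊤ := by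
    rcases eq_or_lt_of_le (le_sup_left : Ka ≤ Ka ⊔ Kb) with heq | hlt
    · exfalso
      apply hne
      have hble : Kb ≤ Ka := by rw [heq]; exact le_sup_right
      exact (Submodule.eq_of_le_of_finrank_le hble (by rw [hra, hrb])).symm
    · have h1 : Module.finrank F Ka < Module.finrank F ↥(Ka ⊔ Kb) :=
        Submodule.finrank_lt_finrank_of_lt hlt
      have h2 : Module.finrank F ↥(Ka ⊔ Kb) ≤ k := by
        have h3 := Submodule.finrank_le (Ka ⊔ Kb)
        rwa [Module.finrank_fin_fun] at h3
      apply Submodule.eq_top_of_finrank_eq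
      rw [Module.finrank_fin_fun]
      omega
  have hinf := Submodule.finrank_sup_add_finrank_inf_eq Ka Kb
  rw [hsup, finrank_top, Module.finrank_fin_fun, hra, hrb] at hinf
  have hk2 : 2 ≤ k := by omega
  have hrinf : Module.finrank F ↥(Ka ⊓ Kb) = k - 2 := by omega
  refine ⟨hk2, ?_⟩
  haveI : Fintype ↥(Ka ⊓ Kb) := Fintype.ofFinite _
  have e1 : (univ.filter fun u : Fin k → F =>
        dotProduct u a = 0 ∧ dotProduct u b = 0).card
      = Fintype.card {u : Fin k → F //
        dotProduct u a = 0 ∧ dotProduct u b = 0} :=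
    (Fintype.card_subtype _).symm
  have e2 : Fintype.card {u : Fin k → F //
        dotProduct u a = 0 ∧ dotProduct u b = 0}
      = Fintype.card ↥(Ka ⊓ Kb) := by
    apply Fintype.card_congr
    apply Equiv.subtypeEquivRight
    intro u
    simp [hKa, hKb, dotL, LinearMap.mem_ker, Submodule.mem_inf]
  have e3 := Module.card_eq_pow_finrank (K := F) (V := ↥(Ka ⊓ Kb))
  rw [hrinf] at e3
  rw [e1, e2, e3, ← pow_succ']
  congr 1
  omega


lemma fiber_card (p : Projectivization F (Fin k → F)) :
    (univ.filter fun u : {u : Fin k → F // u ≠ 0} =>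
      Projectivization.mk F u.1 u.2 = p).card = Fintype.card F - 1 := by
  rw [← Fintype.card_units (α := F)]
  symm
  rw [← Finset.card_univ]
  apply Finset.card_bij
    (fun (a : Fˣ) _ => (⟨(a : F) • p.rep, by
      simp [smul_ne_zero_iff, Projectivization.rep_nonzero p, a.ne_zero]⟩ :
        {u : Fin k → F // u ≠ 0}))
  · intro a _
    simp only [Finset.mem_filter, Finset.mem_univ, true_and]
    conv_rhs => rw [← p.mk_rep]
    rw [Projectivization.mk_eq_mk_iff]
    exact ⟨a, rfl⟩
  · intro a _ b _ hab
    have h1 : (a : F) • p.rep = (b : F) • p.rep := congrArg Subtype.val hab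
    exact Units.ext (smul_left_injective F p.rep_nonzero h1)
  · intro u hu
    simp only [Finset.mem_filter, Finset.mem_univ, true_and] at hu
    rw [← p.mk_rep, Projectivization.mk_eq_mk_iff] at hu
    obtain ⟨a, ha⟩ := hu
    refine ⟨a, Finset.mem_univ _, ?_⟩
    apply Subtype.ext
    simpa [Units.smul_def] using ha

lemma proj_sum (f : Projectivization F (Fin k → F) → ℝ) (g : (Fin k → F) → ℝ)
    (hg : ∀ (u : Fin k → F) (hu : u ≠ 0), g u = f (Projectivization.mk F u hu))
    (hg0 : g 0 = 0) :
    ((Fintype.card F : ℝ) - 1) * ∑ p : Projectivization F (Fin k → F), f p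
      = ∑ u : Fin k → F, g u := by
  classical
  have hsurj : Function.Surjective
      (fun u : {u : Fin k → F // u ≠ 0} => Projectivization.mk F u.1 u.2) :=
    fun p => ⟨⟨p.rep, p.rep_nonzero⟩, p.mk_rep⟩
  have h1 : ∑ u : Fin k → F, g u = ∑ u : {u : Fin k → F // u ≠ 0}, g u.1 := by
    rw [← Finset.sum_subtype (univ.filter fun u : Fin k → F => u ≠ 0) (by simp) g]
    rw [Finset.sum_filter]
    apply Finset.sum_congr rfl
    intro u _
    by_cases h : u = 0
    · simp [h, hg0]
    · simp [h]
  have h2 : ∑ u : {u : Fin k → F // u ≠ 0}, g u.1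
      = ∑ u : {u : Fin k → F // u ≠ 0}, f (Projectivization.mk F u.1 u.2) :=
    Finset.sum_congr rfl fun u _ => hg u.1 u.2
  rw [h1, h2, Finset.sum_comp f (fun u : {u : Fin k → F // u ≠ 0} =>
    Projectivization.mk F u.1 u.2)]
  rw [Finset.image_univ_of_surjective hsurj]
  have h3 : ∀ b : Projectivization F (Fin k → F),
      (univ.filter fun u : {u : Fin k → F // u ≠ 0} =>
        Projectivization.mk F u.1 u.2 = b).card • f b
      = ((Fintype.card F : ℝ) - 1) * f b := by
    intro b
    rw [fiber_card b, nsmul_eq_mul, Nat.cast_sub Fintype.card_pos, Nat.cast_one]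
  rw [Finset.sum_congr rfl fun b _ => h3 b, ← Finset.mul_sum]

end Counting

section Sums

variable {F : Type} [Field F] [Fintype F] [DecidableEq F] {k : ℕ}

lemma hk_pos (v : Projectivization F (Fin k → F)) : 1 ≤ k := by
  rcases Nat.eq_zero_or_pos k with h | h
  · exfalso
    apply v.rep_nonzero
    subst h
    exact Subsingleton.elim _ _
  · exact h

lemma mkq_mk (v : Projectivization F (Fin k → F)) (u : Fin k → F) (hu : u ≠ 0) :
    Mkq F k v (Projectivization.mk F u hu)
      = if dotProduct v.rep u = 0 then (0 : ℝ) else 1 := by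
  obtain ⟨a, ha⟩ := Projectivization.exists_smul_eq_mk_rep F u hu
  have hrep : (Projectivization.mk F u hu).rep = (a : F) • u := by
    rw [← ha, Units.smul_def]
  rw [Mkq, Matrix.of_apply, hrep, dotProduct_smul, smul_eq_mul]
  simp [mul_eq_zero, a.ne_zero]

lemma mkq_mk' (w : Projectivization F (Fin k → F)) (u : Fin k → F) (hu : u ≠ 0) :
    Mkq F k (Projectivization.mk F u hu) w
      = if dotProduct u w.rep = 0 then (0 : ℝ) else 1 := by
  obtain ⟨a, ha⟩ := Projectivization.exists_smul_eq_mk_rep F u hu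
  have hrep : (Projectivization.mk F u hu).rep = (a : F) • u := by
    rw [← ha, Units.smul_def]
  rw [Mkq, Matrix.of_apply, hrep, smul_dotProduct, smul_eq_mul]
  simp [mul_eq_zero, a.ne_zero]

lemma row_sum (v : Projectivization F (Fin k → F)) :
    ∑ p : Projectivization F (Fin k → F), Mkq F k v p
      = (Fintype.card F : ℝ) ^ (k - 1) := by
  classical
  have hq2 : 1 < Fintype.card F := Fintype.one_lt_card
  have hQ1 : (Fintype.card F : ℝ) - 1 ≠ 0 := by
    have : (1 : ℝ) < (Fintype.card F : ℝ) := by exact_mod_cast hq2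
    linarith
  apply mul_left_cancel₀ hQ1
  rw [proj_sum (fun p => Mkq F k v p)
      (fun u => if dotProduct v.rep u = 0 then (0 : ℝ) else 1)
      (fun u hu => (mkq_mk v u hu).symm) (by simp)]
  have hcount : (univ.filter fun u : Fin k → F =>
      dotProduct u v.rep = 0).card = Fintype.card F ^ (k - 1) :=
    card_ker_dot v.rep_nonzero
  have step : ∀ u : Fin k → F, (if dotProduct v.rep u = 0 then (0 : ℝ) else 1)
      = 1 - (if dotProduct u v.rep = 0 then (1 : ℝ) else 0) := by
    intro u
    rw [dotProduct_comm]
    by_cases h : dotProduct u v.rep = 0 <;> simp [h]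
  rw [Finset.sum_congr rfl fun u _ => step u, Finset.sum_sub_distrib, Finset.sum_const,
    Finset.sum_boole, hcount]
  obtain ⟨m, rfl⟩ : ∃ m, k = m + 1 := ⟨k - 1, by have := hk_pos v; omega⟩
  simp only [Finset.card_univ, Nat.add_sub_cancel, nsmul_eq_mul, mul_one]
  rw [Fintype.card_fun, Fintype.card_fin]
  push_cast
  ring

lemma ker_ne_of_proj_ne {v w : Projectivization F (Fin k → F)} (hvw : v ≠ w) :
    LinearMap.ker (dotL v.rep) ≠ LinearMap.ker (dotL w.rep) := by
  intro h
  obtain ⟨c, hc⟩ := ker_dotL_eq v.rep_nonzero h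
  apply hvw
  rw [← v.mk_rep, ← w.mk_rep]
  symm
  rw [Projectivization.mk_eq_mk_iff']
  exact ⟨c, hc.symm⟩

lemma pair_sum (v w : Projectivization F (Fin k → F)) (hvw : v ≠ w) :
    (Fintype.card F : ℝ) * ∑ p : Projectivization F (Fin k → F), Mkq F k v p * Mkq F k p w
      = ((Fintype.card F : ℝ) - 1) * (Fintype.card F : ℝ) ^ (k - 1) := by
  classical
  have hq2 : 1 < Fintype.card F := Fintype.one_lt_card
  have hQ1 : (Fintype.card F : ℝ) - 1 ≠ 0 := by
    have : (1 : ℝ) < (Fintype.card F : ℝ) := by exact_mod_cast hq2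
    linarith
  obtain ⟨hk2, hpair⟩ := card_ker_dot_pair v.rep_nonzero w.rep_nonzero (ker_ne_of_proj_ne hvw)
  apply mul_left_cancel₀ hQ1
  rw [← mul_assoc, mul_comm (((Fintype.card F : ℝ)) - 1) ((Fintype.card F : ℝ)), mul_assoc,
    proj_sum (fun p => Mkq F k v p * Mkq F k p w)
      (fun u => (if dotProduct v.rep u = 0 then (0 : ℝ) else 1) *
        (if dotProduct u w.rep = 0 then (0 : ℝ) else 1))
      (fun u hu => by beta_reduce; rw [mkq_mk v u hu, mkq_mk' w u hu]) (by simp)]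
  -- now compute the vector-level sum
  have step : ∀ u : Fin k → F,
      (if dotProduct v.rep u = 0 then (0 : ℝ) else 1) *
        (if dotProduct u w.rep = 0 then (0 : ℝ) else 1)
      = 1 - (if dotProduct u v.rep = 0 then (1 : ℝ) else 0)
          - (if dotProduct u w.rep = 0 then (1 : ℝ) else 0)
          + (if dotProduct u v.rep = 0 ∧ dotProduct u w.rep = 0
              then (1 : ℝ) else 0) := by
    intro u
    rw [dotProduct_comm v.rep u]
    by_cases h1 : dotProduct u v.rep = 0 <;>
      by_cases h2 : dotProduct u w.rep = 0 <;> simp [h1, h2]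
  rw [Finset.sum_congr rfl fun u _ => step u]
  rw [Finset.sum_add_distrib, Finset.sum_sub_distrib, Finset.sum_sub_distrib,
    Finset.sum_const, Finset.sum_boole, Finset.sum_boole, Finset.sum_boole]
  have hca : (univ.filter fun u : Fin k → F =>
      dotProduct u v.rep = 0).card = Fintype.card F ^ (k - 1) :=
    card_ker_dot v.rep_nonzero
  have hcb : (univ.filter fun u : Fin k → F =>
      dotProduct u w.rep = 0).card = Fintype.card F ^ (k - 1) :=
    card_ker_dot w.rep_nonzero
  rw [hca, hcb]
  obtain ⟨m, rfl⟩ : ∃ m, k = m + 2 := ⟨k - 2, by omega⟩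
  have hpair' : (Fintype.card F : ℝ) *
      ((univ.filter fun u : Fin (m + 2) → F =>
        dotProduct u v.rep = 0 ∧ dotProduct u w.rep = 0).card : ℝ)
      = (Fintype.card F : ℝ) ^ (m + 1) := by
    exact_mod_cast congrArg (Nat.cast : ℕ → ℝ) hpair
  simp only [Finset.card_univ, Nat.add_sub_cancel, nsmul_eq_mul, mul_one]
  rw [Fintype.card_fun, Fintype.card_fin]
  push_cast at hpair' ⊢
  linear_combination hpair'

end Sums


section Inverse

variable {F : Type} [Field F] [Fintype F] [DecidableEq F] {k : ℕ}

lemma Mkq_inv_eq :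
    (Mkq F k)⁻¹ = ((Fintype.card F : ℝ) ^ (k - 1))⁻¹ •
      ((Fintype.card F : ℝ) • Mkq F k
        - ((Fintype.card F : ℝ) - 1) • Matrix.of (fun _ _ => (1 : ℝ))) := by
  classical
  have hq2 : 1 < Fintype.card F := Fintype.one_lt_card
  have hQ0 : (Fintype.card F : ℝ) ≠ 0 := by positivity
  have he : ((Fintype.card F : ℝ)) ^ (k - 1) ≠ 0 := by positivity
  apply Matrix.inv_eq_right_inv
  ext v w
  rw [Matrix.mul_apply, Matrix.one_apply]
  simp only [Matrix.smul_apply, Matrix.sub_apply, Matrix.of_apply, smul_eq_mul]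
  have expand : ∀ p, Mkq F k v p *
      (((Fintype.card F : ℝ) ^ (k - 1))⁻¹ *
        ((Fintype.card F : ℝ) * Mkq F k p w - ((Fintype.card F : ℝ) - 1) * 1))
      = ((Fintype.card F : ℝ) ^ (k - 1))⁻¹ *
        ((Fintype.card F : ℝ) * (Mkq F k v p * Mkq F k p w)
          - ((Fintype.card F : ℝ) - 1) * Mkq F k v p) := fun p => by ring
  rw [Finset.sum_congr rfl fun p _ => expand p, ← Finset.mul_sum,
    Finset.sum_sub_distrib, ← Finset.mul_sum, ← Finset.mul_sum, row_sum v]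
  by_cases hvw : v = w
  · subst hvw
    have hdiag : ∀ p, Mkq F k v p * Mkq F k p v = Mkq F k v p := by
      intro p
      rw [Mkq, Matrix.of_apply, Matrix.of_apply, dotProduct_comm p.rep v.rep]
      by_cases h : dotProduct v.rep p.rep = 0 <;> simp [h]
    rw [Finset.sum_congr rfl fun p _ => hdiag p, row_sum v, if_pos rfl]
    have : (Fintype.card F : ℝ) * (Fintype.card F : ℝ) ^ (k - 1)
        - ((Fintype.card F : ℝ) - 1) * (Fintype.card F : ℝ) ^ (k - 1)
        = (Fintype.card F : ℝ) ^ (k - 1) := by ring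
    rw [this, inv_mul_cancel₀ he]
  · rw [if_neg hvw]
    have hp := pair_sum v w hvw
    rw [hp, sub_self, mul_zero]

end Inverse



theorem stmt_13 (q k : ℕ) (hq : IsPrimePow q) (hk : 0 < k) (S : Multiset ℤ)
    (hcard : Multiset.card S = (q ^ k - 1) / (q - 1))
    (F : Type) [Field F] [Fintype F] [DecidableEq F] (hF : Fintype.card F = q)
    (π : Projectivization F (Fin k → F) → ℤ) (hπ : Finset.univ.val.map π = S) :
    ∀ p, (splitDiff q k S : ℝ) / (q : ℝ) ^ (k - 1) ≤
      ((Mkq F k)⁻¹ *ᵥ fun w => (π w : ℝ)) p := by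
  classical
  subst hF
  intro p
  have hq2 : 1 < Fintype.card F := Fintype.one_lt_card
  have hQ0 : (0 : ℝ) < (Fintype.card F : ℝ) := by positivity
  have hepos : (0 : ℝ) < ((Fintype.card F : ℝ)) ^ (k - 1) := by positivity
  set A : Finset (Projectivization F (Fin k → F)) :=
    univ.filter (fun w => ¬ dotProduct p.rep w.rep = 0) with hA
  -- the value of the entry
  have hMA : ∑ w, Mkq F k p w * (π w : ℝ) = ∑ w ∈ A, (π w : ℝ) := by
    rw [hA, Finset.sum_filter]
    apply Finset.sum_congr rfl
    intro w _
    rw [Mkq, Matrix.of_apply]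
    by_cases h : dotProduct p.rep w.rep = 0 <;> simp [h]
  have hval : (((Mkq F k)⁻¹ *ᵥ fun w => (π w : ℝ)) p)
      = ((Fintype.card F : ℝ) ^ (k - 1))⁻¹ *
        ((Fintype.card F : ℝ) * (∑ w ∈ A, (π w : ℝ))
          - ((Fintype.card F : ℝ) - 1) * ∑ w, (π w : ℝ)) := by
    rw [Mkq_inv_eq]
    simp only [Matrix.mulVec, dotProduct, Matrix.smul_apply, Matrix.sub_apply,
      Matrix.of_apply, smul_eq_mul]
    have expand : ∀ w, ((Fintype.card F : ℝ) ^ (k - 1))⁻¹ *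
          ((Fintype.card F : ℝ) * Mkq F k p w - ((Fintype.card F : ℝ) - 1) * 1) * (π w : ℝ)
        = ((Fintype.card F : ℝ) ^ (k - 1))⁻¹ *
          ((Fintype.card F : ℝ) * (Mkq F k p w * (π w : ℝ))
            - ((Fintype.card F : ℝ) - 1) * (π w : ℝ)) := fun w => by ring
    rw [Finset.sum_congr rfl fun w _ => expand w, ← Finset.mul_sum,
      Finset.sum_sub_distrib, ← Finset.mul_sum, ← Finset.mul_sum, hMA]
  -- the cardinality of A
  have hcardA : (A.card : ℝ) = (Fintype.card F : ℝ) ^ (k - 1) := by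
    have hrow := row_sum p
    have : ∑ w : Projectivization F (Fin k → F), Mkq F k p w = (A.card : ℝ) := by
      rw [hA, ← Finset.sum_boole]
      apply Finset.sum_congr rfl
      intro w _
      rw [Mkq, Matrix.of_apply]
      by_cases h : dotProduct p.rep w.rep = 0 <;> simp [h]
    rw [← this, hrow]
  have hcardAN : A.card = Fintype.card F ^ (k - 1) := by
    have : ((Fintype.card F ^ (k - 1) : ℕ) : ℝ) = (Fintype.card F : ℝ) ^ (k - 1) := by
      push_cast; ring
    exact_mod_cast hcardA.trans this.symm
  -- multiset inequality
  set T : Multiset ℤ := A.val.map π with hT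
  have hTS : T ≤ S := by
    rw [← hπ, hT]
    exact Multiset.map_le_map (Finset.val_le_iff.mpr (Finset.subset_univ A))
  have hTcard : Multiset.card T = Fintype.card F ^ (k - 1) := by
    rw [hT, Multiset.card_map]
    exact hcardAN
  have htake := take_sum_le_multiset S T hTS
  rw [hTcard] at htake
  have hTsum : T.sum = ∑ w ∈ A, π w := by rw [Finset.sum]
  rw [hTsum] at htake
  have hSsum : S.sum = ∑ w, π w := by rw [← hπ]; rfl
  -- split difference identity
  have hsplitsum : ((S.sort (· ≤ ·)).take (Fintype.card F ^ (k - 1))).sum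
      + ((S.sort (· ≤ ·)).drop (Fintype.card F ^ (k - 1))).sum = S.sum := by
    rw [← List.sum_append, List.take_append_drop, ← Multiset.sum_coe, Multiset.sort_eq]
  have hsplit : splitDiff (Fintype.card F) k S
      = (Fintype.card F : ℤ) * ((S.sort (· ≤ ·)).take (Fintype.card F ^ (k - 1))).sum
        - ((Fintype.card F : ℤ) - 1) * S.sum := by
    rw [splitDiff]
    linear_combination ((1 : ℤ) - (Fintype.card F : ℤ)) * hsplitsum
  have hZ : splitDiff (Fintype.card F) k S
      ≤ (Fintype.card F : ℤ) * (∑ w ∈ A, π w) - ((Fintype.card F : ℤ) - 1) * S.sum := by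
    rw [hsplit]
    have hmul : (Fintype.card F : ℤ) * ((S.sort (· ≤ ·)).take (Fintype.card F ^ (k - 1))).sum
        ≤ (Fintype.card F : ℤ) * (∑ w ∈ A, π w) :=
      mul_le_mul_of_nonneg_left htake (by positivity)
    linarith
  -- conclude
  rw [hval, div_eq_inv_mul]
  apply mul_le_mul_of_nonneg_left _ (le_of_lt (inv_pos.mpr hepos))
  rw [hSsum] at hZ
  calc (splitDiff (Fintype.card F) k S : ℝ)
      ≤ ((Fintype.card F : ℤ) * (∑ w ∈ A, π w)
          - ((Fintype.card F : ℤ) - 1) * ∑ w, π w : ℤ) := by exact_mod_cast hZ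
    _ = (Fintype.card F : ℝ) * (∑ w ∈ A, (π w : ℝ))
          - ((Fintype.card F : ℝ) - 1) * ∑ w, (π w : ℝ) := by push_cast; ring
end

section
/- The multiset S = {2, 2, 2, 3, 5, 5, 5} is 2-projection-forcing, is realized by an F_2-linear projection (for instance, the projection onto the last coordinate of the code in F_2^7 spanned by {(1,1,0,0,0,0,0), (1,0,1,0,0,0,0), (0,0,0,1,1,1,0)} realizes S), and yet its split difference satisfies δ_2(S) = −6 ≤ −2^{3−1}; hence the sufficient condition δ_2(S) > −2^{k−1} of the split-difference criterion is not necessary for being 2-projection-forcing. -/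
open Matrix

/-- The code in `F₂⁷` spanned by `{(1,1,0,0,0,0,0), (1,0,1,0,0,0,0), (0,0,0,1,1,1,0)}`. -/
def V₃ : Submodule (ZMod 2) (Fin 7 → ZMod 2) :=
  Submodule.span (ZMod 2) {![1,1,0,0,0,0,0], ![1,0,1,0,0,0,0], ![0,0,0,1,1,1,0]}

section Card2
variable {F : Type} [Field F] [Fintype F] (h2 : Fintype.card F = 2)
include h2

lemma two_cases (x : F) : x = 0 ∨ x = 1 := by
  classical
  have h01 : (0:F) ≠ 1 := zero_ne_one
  have hcard : ({0,1} : Finset F).card = 2 := by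
    rw [Finset.card_insert_of_notMem (by simp), Finset.card_singleton]
  have : ({0,1} : Finset F) = Finset.univ := Finset.eq_univ_of_card _ (by rw [hcard, h2])
  have hx : x ∈ ({0,1} : Finset F) := this ▸ Finset.mem_univ x
  simpa using hx

lemma unit_eq_one (a : Fˣ) : (a : F) = 1 := by
  rcases two_cases h2 (a:F) with h | h
  · exact absurd h a.ne_zero
  · exact h

lemma one_add_one_eq_zero : (1 : F) + 1 = 0 := by
  rcases two_cases h2 ((1:F)+1) with h | h
  · exact h
  · have : (1:F) = 0 := by linear_combination h
    exact absurd this one_ne_zero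

lemma char2_self_add (x : F) : x + x = 0 := by
  have := one_add_one_eq_zero h2
  calc x + x = (1+1) * x := by ring
  _ = 0 := by rw [this]; ring

end Card2

section Proj
variable {F : Type} [Field F] [Fintype F] (h2 : Fintype.card F = 2)
variable {V : Type*} [AddCommGroup V] [Module F V]
include h2

lemma rep_mk (v : V) (hv : v ≠ 0) : (Projectivization.mk F v hv).rep = v := by
  have h := Projectivization.mk_rep (Projectivization.mk F v hv)
  rw [Projectivization.mk_eq_mk_iff] at h
  obtain ⟨a, ha⟩ := h
  rw [← ha, Units.smul_def, unit_eq_one h2 a, one_smul]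

omit h2 [Fintype F] in
lemma rep_injective : Function.Injective (Projectivization.rep (K := F) (V := V)) := by
  intro p q h
  rw [← Projectivization.mk_rep p, ← Projectivization.mk_rep q]
  simp_rw [h]

end Proj

section Count
variable {F : Type} [Field F] [Fintype F]
variable {V : Type*} [AddCommGroup V] [Module F V] [Fintype V] [DecidableEq V]
variable [DecidableEq F]
variable (h2 : Fintype.card F = 2) (h8 : Fintype.card V = 8)
include h2

omit [Fintype V] [DecidableEq V] h8 in
lemma self_add_self (v : V) : v + v = 0 := by
  have h : ((1:F)+1) • v = v + v := by rw [add_smul, one_smul]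
  rw [← h, one_add_one_eq_zero h2, zero_smul]

include h8


open Finset

lemma card_support_eq (g : V →ₗ[F] F) (hg : g ≠ 0) :
    (univ.filter fun u => g u ≠ 0).card = 4 := by
  classical
  obtain ⟨u₀, hu₀⟩ : ∃ u₀, g u₀ ≠ 0 := by
    by_contra hc
    push_neg at hc
    exact hg (by ext u; simpa using hc u)
  have key : (univ.filter fun u => g u = 0).card = (univ.filter fun u => g u ≠ 0).card := by
    apply Finset.card_nbij' (i := fun u => u + u₀) (j := fun u => u + u₀)
    · intro a ha
      simp only [mem_coe, mem_filter, mem_univ, true_and] at ha ⊢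
      rw [map_add, ha, zero_add]
      exact hu₀
    · intro a ha
      simp only [mem_coe, mem_filter, mem_univ, true_and] at ha ⊢
      rw [map_add]
      rcases two_cases h2 (g a) with h | h
      · exact absurd h ha
      · rcases two_cases h2 (g u₀) with h' | h'
        · exact absurd h' hu₀
        · rw [h, h', one_add_one_eq_zero h2]
    · intro a _
      dsimp only; rw [add_assoc, self_add_self h2 (V := V) _, add_zero]
    · intro a _
      dsimp only; rw [add_assoc, self_add_self h2 (V := V) _, add_zero]
  have tot := Finset.card_filter_add_card_filter_not
    (s := (univ : Finset V)) (p := fun u => g u = 0)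
  simp only [Finset.card_univ, h8] at tot
  simp only [ne_eq, Finset.filter_congr_decidable] at key tot ⊢
  omega

lemma card_pair_aux (g h : V →ₗ[F] F) (hh : h ≠ 0) (u₁ : V)
    (hg1 : g u₁ = 1) (hh1 : h u₁ = 0) :
    (univ.filter fun u => g u ≠ 0 ∧ h u ≠ 0).card = 2 := by
  classical
  have hX : (univ.filter fun u => h u ≠ 0).card = 4 := card_support_eq h2 h8 h hh
  have key : (univ.filter fun u => h u ≠ 0 ∧ g u = 0).card
      = (univ.filter fun u => h u ≠ 0 ∧ ¬ g u = 0).card := by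
    apply Finset.card_nbij' (i := fun u => u + u₁) (j := fun u => u + u₁)
    · intro a ha
      simp only [mem_coe, mem_filter, mem_univ, true_and] at ha ⊢
      constructor
      · rw [map_add, hh1, add_zero]; exact ha.1
      · rw [map_add, ha.2, zero_add, hg1]; exact one_ne_zero
    · intro a ha
      simp only [mem_coe, mem_filter, mem_univ, true_and] at ha ⊢
      constructor
      · rw [map_add, hh1, add_zero]; exact ha.1
      · rw [map_add, hg1]
        rcases two_cases h2 (g a) with h' | h'
        · exact absurd h' ha.2
        · rw [h', one_add_one_eq_zero h2]
    · intro a _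
      dsimp only; rw [add_assoc, self_add_self h2 (V := V) _, add_zero]
    · intro a _
      dsimp only; rw [add_assoc, self_add_self h2 (V := V) _, add_zero]
  have tot := Finset.card_filter_add_card_filter_not
    (s := univ.filter fun u => h u ≠ 0) (p := fun u => g u = 0)
  rw [Finset.filter_filter, Finset.filter_filter, hX] at tot
  have e1 : (univ.filter fun u => g u ≠ 0 ∧ h u ≠ 0)
      = (univ.filter fun u => h u ≠ 0 ∧ ¬ g u = 0) := by
    apply Finset.filter_congr; intro x _; tauto
  rw [e1]
  simp only [ne_eq, Finset.filter_congr_decidable] at key tot ⊢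
  omega

lemma card_pair (g h : V →ₗ[F] F) (hg : g ≠ 0) (hh : h ≠ 0) (hgh : g ≠ h) :
    (univ.filter fun u => g u ≠ 0 ∧ h u ≠ 0).card = 2 := by
  classical
  obtain ⟨u₁, hu₁⟩ : ∃ u₁, g u₁ ≠ h u₁ := by
    by_contra hc
    push_neg at hc
    exact hgh (by ext u; exact hc u)
  rcases two_cases h2 (g u₁) with hgv | hgv <;> rcases two_cases h2 (h u₁) with hhv | hhv
  · exact absurd (hgv.trans hhv.symm) hu₁
  · have := card_pair_aux h2 h8 h g hg u₁ hhv hgv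
    have e : (univ.filter fun u => g u ≠ 0 ∧ h u ≠ 0)
        = (univ.filter fun u => h u ≠ 0 ∧ g u ≠ 0) :=
      Finset.filter_congr (fun x _ => by tauto)
    rw [e]; exact this
  · exact card_pair_aux h2 h8 g h hh u₁ hgv hhv
  · exact absurd (hgv.trans hhv.symm) hu₁

end Count


section Sums
open Finset
variable {F : Type} [Field F] [Fintype F] [DecidableEq F]
variable {V : Type*} [AddCommGroup V] [Module F V] [Fintype V] [DecidableEq V]
variable (h2 : Fintype.card F = 2) (h8 : Fintype.card V = 8)

omit [Fintype V] [DecidableEq V] in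
lemma boole_eq (x : F) : (if x = 0 then (0:ℤ) else 1) = (if x ≠ 0 then (1:ℤ) else 0) := by
  by_cases h : x = 0 <;> simp [h]

include h2 h8

lemma key_sum {ι : Type*} [Fintype ι] [DecidableEq ι] (G : ι → (V →ₗ[F] F))
    (g : V →ₗ[F] F) (hg : g ≠ 0) :
    ∑ u ∈ univ.filter (fun u : V => g u ≠ 0), ∑ j, (if G j u = 0 then (0:ℤ) else 1)
      = 2 * (univ.filter fun j => G j = g).card + 2 * (univ.filter fun j => G j ≠ 0).card := by
  classical
  rw [Finset.sum_comm]
  have hj : ∀ j : ι, ∑ u ∈ univ.filter (fun u : V => g u ≠ 0), (if G j u = 0 then (0:ℤ) else 1)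
      = (if G j = 0 then 0 else if G j = g then 4 else 2) := by
    intro j
    simp_rw [boole_eq]
    rw [Finset.sum_boole, Finset.filter_filter]
    by_cases h0 : G j = 0
    · have : (univ.filter fun u : V => g u ≠ 0 ∧ G j u ≠ 0) = ∅ := by
        apply Finset.filter_false_of_mem
        intro u _
        rw [h0]
        simp
      rw [this]
      simp [h0]
    · by_cases heq : G j = g
      · have e : (univ.filter fun u : V => g u ≠ 0 ∧ G j u ≠ 0)
            = (univ.filter fun u : V => g u ≠ 0) := by
          apply Finset.filter_congr
          intro u _
          rw [heq]
          tauto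
        rw [e, card_support_eq h2 h8 g hg]
        simp [h0, heq, hg]
      · have e : (univ.filter fun u : V => g u ≠ 0 ∧ G j u ≠ 0).card = 2 :=
          card_pair h2 h8 g (G j) hg h0 (fun h => heq h.symm)
        rw [e]
        simp [h0, heq]
  rw [Finset.sum_congr rfl (fun j _ => hj j)]
  have split : ∀ j : ι, (if G j = 0 then (0:ℤ) else if G j = g then 4 else 2)
      = 2 * (if G j = g then 1 else 0) + 2 * (if G j ≠ 0 then 1 else 0) := by
    intro j
    by_cases h0 : G j = 0
    · have hne : G j ≠ g := by rw [h0]; exact fun h => hg h.symm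
      rw [if_pos h0, if_neg hne, if_neg (by simp [h0])]
      ring
    · by_cases heq : G j = g <;> simp [h0, heq, hg]
  rw [Finset.sum_congr rfl (fun j _ => split j), Finset.sum_add_distrib,
    ← Finset.mul_sum, ← Finset.mul_sum, Finset.sum_boole, Finset.sum_boole]

lemma key_sum_total {ι : Type*} [Fintype ι] [DecidableEq ι] (G : ι → (V →ₗ[F] F)) :
    ∑ u ∈ univ.filter (fun u : V => u ≠ 0), ∑ j, (if G j u = 0 then (0:ℤ) else 1)
      = 4 * (univ.filter fun j => G j ≠ 0).card := by
  classical
  rw [Finset.sum_comm]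
  have hj : ∀ j : ι, ∑ u ∈ univ.filter (fun u : V => u ≠ 0), (if G j u = 0 then (0:ℤ) else 1)
      = (if G j = 0 then 0 else 4) := by
    intro j
    simp_rw [boole_eq]
    rw [Finset.sum_boole, Finset.filter_filter]
    by_cases h0 : G j = 0
    · have : (univ.filter fun u : V => u ≠ 0 ∧ G j u ≠ 0) = ∅ := by
        apply Finset.filter_false_of_mem
        intro u _
        rw [h0]
        simp
      rw [this]
      simp [h0]
    · have e : (univ.filter fun u : V => u ≠ 0 ∧ G j u ≠ 0)
          = (univ.filter fun u : V => G j u ≠ 0) := by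
        apply Finset.filter_congr
        intro u _
        constructor
        · exact fun h => h.2
        · intro h
          refine ⟨fun h0' => h ?_, h⟩
          rw [h0', map_zero]
      rw [e, card_support_eq h2 h8 (G j) h0]
      simp [h0]
  rw [Finset.sum_congr rfl (fun j _ => hj j)]
  have split : ∀ j : ι, (if G j = 0 then (0:ℤ) else 4) = 4 * (if G j ≠ 0 then 1 else 0) := by
    intro j
    by_cases h0 : G j = 0 <;> simp [h0]
  rw [Finset.sum_congr rfl (fun j _ => split j), ← Finset.mul_sum, Finset.sum_boole]

end Sums

section Lemma27
open Finset

lemma sum3_le {α : Type*} (s : Finset α) (f : α → ℤ) (h3 : s.card = 3)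
    (hv : ∀ x ∈ s, f x = 2 ∨ f x = 3 ∨ f x = 5) (he : Even (∑ x ∈ s, f x)) :
    ∑ x ∈ s, f x ≤ 12 := by
  classical
  obtain ⟨x, y, z, hxy, hxz, hyz, rfl⟩ := Finset.card_eq_three.mp h3
  have hms : ∑ w ∈ ({x, y, z} : Finset α), f w = f x + f y + f z := by
    rw [Finset.sum_insert (by simp [hxy, hxz]), Finset.sum_insert (by simp [hyz]),
      Finset.sum_singleton, add_assoc]
  rw [hms] at he ⊢
  obtain ⟨k, hk⟩ := he
  have h1 := hv x (by simp)
  have h2 := hv y (by simp)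
  have h3 := hv z (by simp)
  rcases h1 with h|h|h <;> rcases h2 with h'|h'|h' <;> rcases h3 with h''|h''|h'' <;> omega

end Lemma27



section Transport
open Finset
variable {F : Type} [Field F] [Fintype F] [DecidableEq F]
variable {V : Type*} [AddCommGroup V] [Module F V] [Fintype V] [DecidableEq V]
variable (h2 : Fintype.card F = 2)
include h2

lemma sum_rep_filter (P : V → Prop) [DecidablePred P] (f : V → ℤ) :
    ∑ p ∈ (univ : Finset (Projectivization F V)).filter (fun p => P p.rep), f p.rep
      = ∑ u ∈ univ.filter (fun u : V => u ≠ 0 ∧ P u), f u := by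
  apply Finset.sum_bij (i := fun p _ => p.rep)
  · intro p hp
    simp only [mem_filter, mem_univ, true_and] at hp ⊢
    exact ⟨p.rep_nonzero, hp⟩
  · intro p _ q _ h
    exact rep_injective h
  · intro u hu
    simp only [mem_filter, mem_univ, true_and] at hu
    refine ⟨Projectivization.mk F u hu.1, ?_, rep_mk h2 u hu.1⟩
    simp only [mem_filter, mem_univ, true_and]
    rw [rep_mk h2]
    exact hu.2
  · intro p _
    rfl

lemma sum_rep (f : V → ℤ) :
    ∑ p ∈ (univ : Finset (Projectivization F V)), f p.rep
      = ∑ u ∈ univ.filter (fun u : V => u ≠ 0), f u := by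
  apply Finset.sum_bij (i := fun p _ => p.rep)
  · intro p _
    simp [p.rep_nonzero]
  · intro p _ q _ h
    exact rep_injective h
  · intro u hu
    simp only [mem_filter, mem_univ, true_and] at hu
    exact ⟨Projectivization.mk F u hu, mem_univ _, rep_mk h2 u hu⟩
  · intro p _
    rfl

end Transport



lemma hammingNorm_int {n : ℕ} {F : Type} [Field F] [Fintype F] [DecidableEq F] (x : Fin n → F) :
    (hammingNorm x : ℤ) = ∑ j, (if x j = 0 then (0:ℤ) else 1) := by
  rw [hammingNorm]
  push_cast [Finset.card_filter]
  apply Finset.sum_congr rfl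
  intro j _
  by_cases h : x j = 0 <;> simp [h]

section MainIneq
open Finset

variable {F : Type} [Field F] [Fintype F] [DecidableEq F] {n m : ℕ}
  {U : Submodule F (Fin n → F)} {V : Submodule F (Fin m → F)}

lemma b_le_a [Fintype U] [DecidableEq U] (h2 : Fintype.card F = 2) (φ : U →ₗ[F] V)
    (hφ : projWeightChanges φ = ({2,2,2,3,5,5,5} : Multiset ℤ))
    (g : U →ₗ[F] F) (hg : g ≠ 0) :
    (univ.filter fun i : Fin m =>
        (LinearMap.proj i).comp ((Submodule.subtype V).comp φ) = g).card
      ≤ (univ.filter fun j : Fin n => (LinearMap.proj j).comp (Submodule.subtype U) = g).card := by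
  classical
  set S : Multiset ℤ := ({2,2,2,3,5,5,5} : Multiset ℤ) with hS
  set Gn : Fin n → (U →ₗ[F] F) := fun j => (LinearMap.proj j).comp (Submodule.subtype U) with hGn
  set Gm : Fin m → (U →ₗ[F] F) := fun i =>
    (LinearMap.proj i).comp ((Submodule.subtype V).comp φ) with hGm
  set C : U → ℤ := fun u =>
    (hammingNorm (u : Fin n → F) : ℤ) - (hammingNorm ((φ u : V) : Fin m → F) : ℤ) with hC
  have hmap : Multiset.map (fun p : Projectivization F U => C p.rep) Finset.univ.val = S := hφ
  -- card of the projectivization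
  have hcard : Fintype.card (Projectivization F U) = 7 := by
    have h := congrArg Multiset.card hmap
    rw [Multiset.card_map] at h
    rw [← Finset.card_univ]
    exact h.trans (by decide)
  -- card U = 8
  have h8 : Fintype.card U = 8 := by
    have e : Projectivization F U ≃ {u : U // u ≠ 0} :=
      ⟨fun p => ⟨p.rep, p.rep_nonzero⟩, fun u => Projectivization.mk F u.1 u.2,
        fun p => Projectivization.mk_rep p, fun u => Subtype.ext (rep_mk h2 u.1 u.2)⟩
    have h7 : Fintype.card {u : U // u ≠ 0} = 7 := by rw [← Fintype.card_congr e, hcard]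
    have hc := Fintype.card_subtype_compl (fun u : U => u = 0)
    rw [Fintype.card_subtype_eq (0 : U)] at hc
    have : Fintype.card {u : U // u ≠ 0} = Fintype.card {u : U // ¬ u = 0} := rfl
    omega
  -- values of C on nonzero vectors
  have hvals : ∀ u : U, u ≠ 0 → C u = 2 ∨ C u = 3 ∨ C u = 5 := by
    intro u hu
    have hm : C (Projectivization.mk F u hu).rep ∈ S := by
      rw [← hmap]
      exact Multiset.mem_map_of_mem _ (Finset.mem_val.mpr (Finset.mem_univ _))
    rw [rep_mk h2] at hm
    rw [hS] at hm
    simp only [Multiset.insert_eq_cons, Multiset.mem_cons, Multiset.mem_singleton] at hm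
    tauto
  -- C as difference of indicator sums
  have hCw : ∀ u : U, C u = (∑ j, if Gn j u = 0 then (0:ℤ) else 1)
      - (∑ i, if Gm i u = 0 then (0:ℤ) else 1) := by
    intro u
    rw [hC]
    simp only
    rw [hammingNorm_int, hammingNorm_int]
    rfl
  -- total sum
  have htot : ∑ u ∈ univ.filter (fun u : U => u ≠ 0), C u = 24 := by
    rw [← sum_rep h2 C]
    have : ∑ p ∈ (univ : Finset (Projectivization F U)), C p.rep
        = (Multiset.map (fun p : Projectivization F U => C p.rep) Finset.univ.val).sum := rfl
    rw [this, hmap, hS]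
    decide
  have htotsplit : ∑ u ∈ univ.filter (fun u : U => u ≠ 0), C u
      = (∑ u ∈ univ.filter (fun u : U => u ≠ 0 ∧ g u = 0), C u)
        + (∑ u ∈ univ.filter (fun u : U => g u ≠ 0), C u) := by
    rw [← Finset.sum_filter_add_sum_filter_not (univ.filter (fun u : U => u ≠ 0))
      (fun u => g u = 0) C, Finset.filter_filter, Finset.filter_filter]
    congr 1
    apply Finset.sum_congr _ (fun _ _ => rfl)
    apply Finset.filter_congr
    intro u _
    constructor
    · exact fun h => h.2
    · intro h
      exact ⟨fun h0 => h (by rw [h0, map_zero]), h⟩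
  -- the two weighted sums
  have hsum1 : ∑ u ∈ univ.filter (fun u : U => g u ≠ 0), C u
      = (2 * (univ.filter fun j => Gn j = g).card + 2 * (univ.filter fun j => Gn j ≠ 0).card)
        - (2 * (univ.filter fun i => Gm i = g).card
            + 2 * (univ.filter fun i => Gm i ≠ 0).card) := by
    rw [Finset.sum_congr rfl (fun u _ => hCw u), Finset.sum_sub_distrib,
      key_sum h2 h8 Gn g hg, key_sum h2 h8 Gm g hg]
  have hsum2 : (24 : ℤ) = 4 * (univ.filter fun j => Gn j ≠ 0).card
      - 4 * (univ.filter fun i => Gm i ≠ 0).card := by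
    rw [← htot, Finset.sum_congr rfl (fun u _ => hCw u), Finset.sum_sub_distrib,
      key_sum_total h2 h8 Gn, key_sum_total h2 h8 Gm]
  -- the line sum
  have hline_card : (univ.filter (fun u : U => u ≠ 0 ∧ g u = 0)).card = 3 := by
    have h4a : (univ.filter fun u : U => g u ≠ 0).card = 4 := card_support_eq h2 h8 g hg
    have h4 : (univ.filter fun u : U => g u = 0).card = 4 := by
      have tot := Finset.card_filter_add_card_filter_not
        (s := (univ : Finset U)) (p := fun u => g u = 0)
      simp only [Finset.card_univ, h8, ne_eq, Finset.filter_congr_decidable] at tot h4a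
      omega
    have he : univ.filter (fun u : U => u ≠ 0 ∧ g u = 0)
        = (univ.filter (fun u : U => g u = 0)).erase 0 := by
      ext u
      simp only [Finset.mem_filter, Finset.mem_univ, true_and, Finset.mem_erase]
    rw [he, Finset.card_erase_of_mem (by simp), h4]
  have hline_le : ∑ u ∈ univ.filter (fun u : U => u ≠ 0 ∧ g u = 0), C u ≤ 12 := by
    apply sum3_le _ _ hline_card
    · intro u hu
      simp only [Finset.mem_filter] at hu
      exact hvals u hu.2.1
    · -- Even
      have : ∑ u ∈ univ.filter (fun u : U => u ≠ 0 ∧ g u = 0), C u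
          = 12 - 2 * (univ.filter fun j => Gn j = g).card
            + 2 * (univ.filter fun i => Gm i = g).card := by
        rw [htot] at htotsplit
        rw [hsum1] at htotsplit
        omega
      rw [this]
      exact ⟨6 - (univ.filter fun j => Gn j = g).card + (univ.filter fun i => Gm i = g).card,
        by ring⟩
  -- conclude
  have : (12 : ℤ) - 2 * (univ.filter fun j => Gn j = g).card
      + 2 * (univ.filter fun i => Gm i = g).card ≤ 12 := by
    rw [htot] at htotsplit
    rw [hsum1] at htotsplit
    omega
  have hfin : (univ.filter fun i : Fin m => Gm i = g).card
      ≤ (univ.filter fun j : Fin n => Gn j = g).card := by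
    push_cast at this
    omega
  exact hfin

end MainIneq



open Finset in
theorem forcing_S : ProjectionForcing 2 ({2,2,2,3,5,5,5} : Multiset ℤ) := by
  intro F _ _ _ h2 n m U V φ hφ
  classical
  haveI : Fintype U := Fintype.ofFinite _
  set Gn : Fin n → (U →ₗ[F] F) := fun j => (LinearMap.proj j).comp (Submodule.subtype U)
    with hGn
  set Gm : Fin m → (U →ₗ[F] F) := fun i =>
    (LinearMap.proj i).comp ((Submodule.subtype V).comp φ) with hGm
  have hGmapp : ∀ (i : Fin m) (u : U), Gm i u = ((φ u : V) : Fin m → F) i := fun i u => rfl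
  have hGnapp : ∀ (j : Fin n) (u : U), Gn j u = (u : Fin n → F) j := fun j u => rfl
  have hAB : ∀ g : U →ₗ[F] F, g ≠ 0 →
      (univ.filter fun i : Fin m => Gm i = g).card
        ≤ (univ.filter fun j : Fin n => Gn j = g).card :=
    fun g hg => b_le_a h2 φ hφ g hg
  have hemb : ∀ g : U →ₗ[F] F, g ≠ 0 → ∃ f : {i : Fin m // Gm i = g} → Fin n,
      Function.Injective f ∧ ∀ i, Gn (f i) = g := by
    intro g hg
    obtain ⟨e⟩ := Function.Embedding.nonempty_of_card_le
      (α := {i : Fin m // Gm i = g}) (β := {j : Fin n // Gn j = g}) (by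
        rw [Fintype.card_subtype, Fintype.card_subtype]
        exact hAB g hg)
    exact ⟨fun i => (e i).1, fun a b hab => e.injective (Subtype.ext hab),
      fun i => (e i).2⟩
  choose f hinj hmem using hemb
  have hcongr : ∀ {g g' : U →ₗ[F] F} (h : g = g') (hgne : g ≠ 0) (hgne' : g' ≠ 0)
      (k : Fin m) (p : Gm k = g) (p' : Gm k = g'),
      f g hgne ⟨k, p⟩ = f g' hgne' ⟨k, p'⟩ := by
    intro g g' h hgne hgne' k p p'
    subst h
    rfl
  set σ : (i : Fin m) → ¬ Gm i = 0 → Fin n := fun i hi => f (Gm i) hi ⟨i, rfl⟩ with hσ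
  set M : Matrix (Fin m) (Fin n) F :=
    fun i j => if h : Gm i = 0 then 0 else if j = σ i h then 1 else 0 with hM
  refine ⟨M, ?_, ?_, ?_⟩
  · intro u
    funext i
    show ((φ u : V) : Fin m → F) i = M.mulVec (u : Fin n → F) i
    rw [← hGmapp i u, Matrix.mulVec, dotProduct]
    by_cases h : Gm i = 0
    · have : ∀ j, M i j * (u : Fin n → F) j = 0 := by
        intro j
        simp only [hM]
        simp [h]
      rw [Finset.sum_congr rfl (fun j _ => this j), Finset.sum_const_zero, h]
      rfl
    · have : ∀ j, M i j * (u : Fin n → F) j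
          = (if j = σ i h then (u : Fin n → F) j else 0) := by
        intro j
        simp only [hM]
        simp only [dif_neg h]
        by_cases hj : j = σ i h <;> simp [hj]
      rw [Finset.sum_congr rfl (fun j _ => this j), Finset.sum_ite_eq' univ (σ i h) _,
        if_pos (Finset.mem_univ _)]
      have hgn : Gn (σ i h) = Gm i := hmem (Gm i) h ⟨i, rfl⟩
      rw [← hgn]
      rfl
  · intro i j j' hj hj'
    simp only [hM] at hj hj'
    by_cases h : Gm i = 0
    · rw [dif_pos h] at hj
      exact absurd rfl hj
    · rw [dif_neg h] at hj hj'
      by_cases h1 : j = σ i h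
      · by_cases h2 : j' = σ i h
        · rw [h1, h2]
        · rw [if_neg h2] at hj'
          exact absurd rfl hj'
      · rw [if_neg h1] at hj
        exact absurd rfl hj
  · intro i i' j hij hij'
    simp only [hM] at hij hij'
    by_cases h : Gm i = 0
    · rw [dif_pos h] at hij
      exact absurd rfl hij
    by_cases h' : Gm i' = 0
    · rw [dif_pos h'] at hij'
      exact absurd rfl hij'
    rw [dif_neg h] at hij
    rw [dif_neg h'] at hij'
    have hj1 : j = σ i h := by
      by_contra hc
      rw [if_neg hc] at hij
      exact hij rfl
    have hj2 : j = σ i' h' := by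
      by_contra hc
      rw [if_neg hc] at hij'
      exact hij' rfl
    by_cases hg : Gm i = Gm i'
    · have e2 : σ i' h' = f (Gm i) h ⟨i', hg.symm⟩ := by
        rw [hσ]
        exact (hcongr hg.symm h' h i' rfl hg.symm)
      have e3 : f (Gm i) h ⟨i, rfl⟩ = f (Gm i) h ⟨i', hg.symm⟩ := by
        rw [← e2]
        show σ i h = σ i' h'
        rw [← hj1, ← hj2]
      exact congrArg Subtype.val (hinj (Gm i) h e3)
    · exfalso
      have e1 : Gn j = Gm i := by rw [hj1, hσ]; exact hmem (Gm i) h ⟨i, rfl⟩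
      have e2 : Gn j = Gm i' := by rw [hj2, hσ]; exact hmem (Gm i') h' ⟨i', rfl⟩
      exact hg (e1.symm.trans e2)

-- general projectivization equiv
section ProjEquiv
variable {F : Type} [Field F] [Fintype F]
variable {V : Type*} [AddCommGroup V] [Module F V]

noncomputable def projEquiv (h2 : Fintype.card F = 2) : Projectivization F V ≃ {v : V // v ≠ 0} :=
  ⟨fun p => ⟨p.rep, p.rep_nonzero⟩, fun u => Projectivization.mk F u.1 u.2,
    fun p => Projectivization.mk_rep p, fun u => Subtype.ext (rep_mk h2 u.1 u.2)⟩

end ProjEquiv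



namespace Stmt16Example

def vA : Fin 7 → ZMod 2 := ![1,1,0,0,0,0,0]
def vB : Fin 7 → ZMod 2 := ![1,0,1,0,0,0,0]
def vC : Fin 7 → ZMod 2 := ![0,0,0,1,1,1,0]

def ψ : (Fin 3 → ZMod 2) →ₗ[ZMod 2] (Fin 7 → ZMod 2) where
  toFun x := x 0 • vA + x 1 • vB + x 2 • vC
  map_add' x y := by
    simp only [Pi.add_apply, add_smul]
    abel
  map_smul' c x := by
    simp only [Pi.smul_apply, smul_eq_mul, RingHom.id_apply, mul_smul, smul_add]

lemma psi_apply (x : Fin 3 → ZMod 2) : ψ x = x 0 • vA + x 1 • vB + x 2 • vC := rfl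

lemma range_psi : LinearMap.range ψ = V₃ := by
  apply le_antisymm
  · rintro _ ⟨x, rfl⟩
    rw [psi_apply]
    apply Submodule.add_mem
    apply Submodule.add_mem
    · exact Submodule.smul_mem _ _ (Submodule.subset_span (by left; rfl))
    · exact Submodule.smul_mem _ _ (Submodule.subset_span (by right; left; rfl))
    · exact Submodule.smul_mem _ _ (Submodule.subset_span (by right; right; rfl))
  · rw [V₃]
    apply Submodule.span_le.mpr
    rintro v hv
    rcases hv with rfl | rfl | rfl
    · exact ⟨![1,0,0], by decide⟩
    · exact ⟨![0,1,0], by decide⟩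
    · exact ⟨![0,0,1], by decide⟩

lemma psi_inj : Function.Injective ψ := by
  rw [← LinearMap.ker_eq_bot, LinearMap.ker_eq_bot']
  intro x hx
  have h0 := congrFun hx 1
  have h1 := congrFun hx 2
  have h2 := congrFun hx 3
  simp only [psi_apply, Pi.add_apply, Pi.smul_apply, smul_eq_mul, Pi.zero_apply] at h0 h1 h2
  rw [show vA 1 = 1 from rfl, show vB 1 = 0 from rfl, show vC 1 = 0 from rfl] at h0
  rw [show vA 2 = 0 from rfl, show vB 2 = 1 from rfl, show vC 2 = 0 from rfl] at h1
  rw [show vA 3 = 0 from rfl, show vB 3 = 0 from rfl, show vC 3 = 1 from rfl] at h2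
  simp only [mul_one, mul_zero, add_zero, zero_add] at h0 h1 h2
  funext i
  fin_cases i
  · exact h0
  · exact h1
  · exact h2

noncomputable def E1 : {x : Fin 3 → ZMod 2 // x ≠ 0} ≃ {v : V₃ // v ≠ 0} := by
  apply Equiv.ofBijective (f := fun x => ⟨⟨ψ x.1, range_psi ▸ LinearMap.mem_range_self ψ x.1⟩,
    by
      simp only [ne_eq, Submodule.mk_eq_zero]
      intro h
      exact x.2 (psi_inj (by rw [h, map_zero]))⟩)
  constructor
  · intro a b hab
    apply Subtype.ext
    apply psi_inj
    exact congrArg (fun z => (z.1 : Fin 7 → ZMod 2)) hab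
  · rintro ⟨⟨v, hv⟩, hvne⟩
    have : v ∈ LinearMap.range ψ := by rw [range_psi]; exact hv
    obtain ⟨x, hx⟩ := this
    refine ⟨⟨x, ?_⟩, ?_⟩
    · intro h0
      apply hvne
      apply Subtype.ext
      simp only [h0, map_zero] at hx
      exact hx.symm
    · apply Subtype.ext
      apply Subtype.ext
      exact hx

end Stmt16Example

namespace Stmt16Example

noncomputable def Etot : {x : Fin 3 → ZMod 2 // x ≠ 0} ≃ Projectivization (ZMod 2) V₃ :=
  E1.trans (projEquiv (by simp) : Projectivization (ZMod 2) V₃ ≃ {v : V₃ // v ≠ 0}).symm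

def W' : Submodule (ZMod 2) (Fin 1 → ZMod 2) := ⊤

noncomputable def φex : V₃ →ₗ[ZMod 2] W' :=
  LinearMap.codRestrict W'
    (LinearMap.pi (fun _ : Fin 1 => (LinearMap.proj (6 : Fin 7)).comp V₃.subtype))
    (fun _ => Submodule.mem_top)

lemma phiex_apply (v : V₃) : ((φex v : W') : Fin 1 → ZMod 2) = ![(v : Fin 7 → ZMod 2) 6] := by
  funext i
  fin_cases i
  rfl

end Stmt16Example

namespace Stmt16Example

lemma card_zmod2 : Fintype.card (ZMod 2) = 2 := by simp

lemma pwc_phiex : projWeightChanges φex = ({2,2,2,3,5,5,5} : Multiset ℤ) := by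
  rw [projWeightChanges]
  have huniv : (Finset.univ : Finset (Projectivization (ZMod 2) V₃)).val
      = (Finset.univ.map Etot.toEmbedding).val := by rw [Finset.map_univ_equiv]
  rw [huniv, Finset.map_val, Multiset.map_map]
  have hfun : ∀ x : {x : Fin 3 → ZMod 2 // x ≠ 0},
      ((fun p : Projectivization (ZMod 2) V₃ =>
        (hammingNorm (p.rep : Fin 7 → ZMod 2) : ℤ)
          - (hammingNorm ((φex p.rep : W') : Fin 1 → ZMod 2) : ℤ)) ∘ Etot.toEmbedding) x
      = (hammingNorm (ψ x.1) : ℤ) - (hammingNorm ![(ψ x.1) 6] : ℤ) := by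
    intro x
    have hrep : (Etot x).rep = (E1 x).1 := by
      show (Projectivization.mk (ZMod 2) (E1 x).1 (E1 x).2).rep = (E1 x).1
      exact rep_mk card_zmod2 _ _
    simp only [Function.comp_apply, Equiv.coe_toEmbedding, hrep, phiex_apply]
    rfl
  rw [Multiset.map_congr rfl (fun x _ => hfun x)]
  decide

end Stmt16Example

namespace Stmt16Example

lemma isproj_phiex : IsProjection φex := by
  classical
  refine ⟨fun _ j => if j = (6 : Fin 7) then 1 else 0, ?_, ?_, ?_⟩
  · intro u
    funext i
    fin_cases i
    rw [phiex_apply]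
    show (u : Fin 7 → ZMod 2) 6 = _
    simp [Matrix.mulVec, dotProduct, Fin.sum_univ_seven]
  · intro i j j' h h'
    by_cases hj : j = 6
    · by_cases hj' : j' = 6
      · rw [hj, hj']
      · simp [hj'] at h'
    · simp [hj] at h
  · intro i i' j _ _
    exact Subsingleton.elim i i'

end Stmt16Example

/-- `S = {2,2,2,3,5,5,5}` is 2-projection-forcing and is realized by a
projection (projection onto the last coordinate of `V₃`), yet `δ₂(S) = -6 ≤ -2^(3-1)`:
the split-difference criterion is not necessary for being projection-forcing. -/
theorem stmt_16 :
    ProjectionForcing 2 ({2,2,2,3,5,5,5} : Multiset ℤ) ∧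
    (∃ (W' : Submodule (ZMod 2) (Fin 1 → ZMod 2)) (φ : V₃ →ₗ[ZMod 2] W'),
      (∀ v : V₃, ((φ v : W') : Fin 1 → ZMod 2) = ![(v : Fin 7 → ZMod 2) 6]) ∧
      projWeightChanges φ = ({2,2,2,3,5,5,5} : Multiset ℤ) ∧
      IsProjection φ) ∧
    splitDiff 2 3 ({2,2,2,3,5,5,5} : Multiset ℤ) = -6 ∧
    (-6 : ℤ) ≤ -2 ^ (3 - 1) := by
  refine ⟨forcing_S,
    ⟨Stmt16Example.W', Stmt16Example.φex, Stmt16Example.phiex_apply,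
      Stmt16Example.pwc_phiex, Stmt16Example.isproj_phiex⟩, ?_, by norm_num⟩
  have hsort : (({2,2,2,3,5,5,5} : Multiset ℤ).sort (· ≤ ·)) = [2,2,2,3,5,5,5] := by
    refine (fun hp h1 h2 => List.Perm.eq_of_pairwise' (r := (· ≤ ·)) h1 h2 hp) ?_ ?_ ?_
    · rw [← Multiset.coe_eq_coe, Multiset.sort_eq]
      rfl
    · exact Multiset.pairwise_sort _ _
    · decide
  rw [splitDiff, hsort]
  norm_num
end
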